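/- arXiv:2301.06827 — 5 statements merged into one kernel-verified Lean document; each statement's English description precedes it below -/
import Mathlib

section
/- Let X be a real normed space and I an ideal on ℕ. A sequence (xₙ) in X is weak I^I-Cauchy if and only if it is weak I-Cauchy. -/
open NormedSpace Classical

/-- `I` is an ideal of subsets of `ℕ`: closed under finite unions and subsets. -/
def IsIdeal (I : Set (Set ℕ)) : Prop :=
  (∀ A ∈ I, ∀ B ∈ I, A ∪ B ∈ I) ∧ (∀ A ∈ I, ∀ B, B ⊆ A → B ∈ I)

/-- The restriction `K|_M = {A ∩ M : A ∈ K}` of an ideal `K` to a set `M ⊆ ℕ`. -/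
def restrictIdeal (K : Set (Set ℕ)) (M : Set ℕ) : Set (Set ℕ) :=
  {A | ∃ B ∈ K, A = B ∩ M}

/-- A sequence `x` in a normed space is weak `I`-Cauchy. -/
def WeakICauchy {X : Type*} [NormedAddCommGroup X] [NormedSpace ℝ X]
    (I : Set (Set ℕ)) (x : ℕ → X) : Prop :=
  ∀ f : StrongDual ℝ X, ∀ ε > (0 : ℝ), ∃ N : ℕ, {n : ℕ | ε ≤ |f (x n) - f (x N)|} ∈ I

/-- The sequence `x` restricted to `M` is weak `K|_M`-Cauchy. -/
def WeakCauchyOn {X : Type*} [NormedAddCommGroup X] [NormedSpace ℝ X]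
    (K : Set (Set ℕ)) (M : Set ℕ) (x : ℕ → X) : Prop :=
  ∀ f : StrongDual ℝ X, ∀ ε > (0 : ℝ), ∃ N ∈ M,
    {n ∈ M | ε ≤ |f (x n) - f (x N)|} ∈ restrictIdeal K M

/-- A sequence `x` is weak `I^K`-Cauchy: there is `M ∈ F(I)` (i.e. `Mᶜ ∈ I`)
such that `x` restricted to `M` is weak `K|_M`-Cauchy. -/
def WeakIKCauchy {X : Type*} [NormedAddCommGroup X] [NormedSpace ℝ X]
    (I K : Set (Set ℕ)) (x : ℕ → X) : Prop :=
  ∃ M : Set ℕ, Mᶜ ∈ I ∧ WeakCauchyOn K M x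

/-- A sequence `x` is weakly `I`-convergent to `l`. -/
def WeakIConv {X : Type*} [NormedAddCommGroup X] [NormedSpace ℝ X]
    (I : Set (Set ℕ)) (x : ℕ → X) (l : X) : Prop :=
  ∀ f : StrongDual ℝ X, ∀ ε > (0 : ℝ), {n : ℕ | ε ≤ |f (x n) - f l|} ∈ I

theorem stmt6 {X : Type*} [NormedAddCommGroup X] [NormedSpace ℝ X]
    (I : Set (Set ℕ)) (hI : IsIdeal I) (x : ℕ → X) :
    WeakIKCauchy I I x ↔ WeakICauchy I x := by
  obtain ⟨hUnion, hSub⟩ := hI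
  constructor
  · rintro ⟨M, hMc, hM⟩ f ε hε
    obtain ⟨N, hNM, B, hB, hBeq⟩ := hM f ε hε
    refine ⟨N, hSub _ (hUnion _ hMc _ hB) _ ?_⟩
    intro n hn
    by_cases hnM : n ∈ M
    · have h2 : n ∈ {n ∈ M | ε ≤ |f (x n) - f (x N)|} := ⟨hnM, hn⟩
      rw [hBeq] at h2
      exact Or.inr h2.1
    · exact Or.inl hnM
  · intro h
    have h0 : (∅ : Set ℕ) ∈ I := by
      obtain ⟨N, hN⟩ := h 0 1 one_pos
      have he : {n : ℕ | (1:ℝ) ≤ |(0 : StrongDual ℝ X) (x n) - (0 : StrongDual ℝ X) (x N)|} = ∅ := by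
        ext n; simp
      rwa [he] at hN
    refine ⟨Set.univ, by simpa using h0, ?_⟩
    intro f ε hε
    obtain ⟨N, hN⟩ := h f ε hε
    exact ⟨N, trivial, _, hN, by ext n; simp⟩
end

section
/- Let X be a real normed space and I, K ideals on ℕ with K ⊆ I. If a sequence (xₙ) in X is weak I^K-Cauchy, then it is weak I-Cauchy. -/
open NormedSpace Classical

theorem stmt7 {X : Type*} [NormedAddCommGroup X] [NormedSpace ℝ X]
    (I K : Set (Set ℕ)) (hI : IsIdeal I) (hK : IsIdeal K) (hsub : K ⊆ I)
    (x : ℕ → X) (h : WeakIKCauchy I K x) : WeakICauchy I x := by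
  obtain ⟨M, hMc, hM⟩ := h
  intro f ε hε
  obtain ⟨N, hNM, hset⟩ := hM f ε hε
  obtain ⟨B, hB, hBeq⟩ := hset
  refine ⟨N, hI.2 _ (hI.1 _ (hsub hB) _ hMc) _ ?_⟩
  intro n hn
  by_cases hnM : n ∈ M
  · left
    have : n ∈ {n ∈ M | ε ≤ |f (x n) - f (x N)|} := ⟨hnM, hn⟩
    rw [hBeq] at this
    exact this.1
  · exact Or.inr hnM
end

section
/- Let X be a real normed space and I, K ideals on ℕ, and let I ∨ K = {A ∪ B : A ∈ I, B ∈ K} be the smallest ideal containing both I and K. A sequence (xₙ) in X is weak I^K-Cauchy if and only if it is weak (I ∨ K)^K-Cauchy. -/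
open NormedSpace Classical

/-- The ideal `I ∨ K = {A ∪ B : A ∈ I, B ∈ K}`, the smallest ideal containing `I` and `K`. -/
def idealSup (I K : Set (Set ℕ)) : Set (Set ℕ) :=
  {C | ∃ A ∈ I, ∃ B ∈ K, C = A ∪ B}

theorem stmt8 {X : Type*} [NormedAddCommGroup X] [NormedSpace ℝ X]
    (I K : Set (Set ℕ)) (hI : IsIdeal I) (hK : IsIdeal K) (x : ℕ → X) :
    WeakIKCauchy I K x ↔ WeakIKCauchy (idealSup I K) K x := by
  constructor
  · rintro ⟨M, hM, hC⟩
    rcases Set.eq_empty_or_nonempty K with hKe | ⟨B0, hB0⟩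
    · exfalso
      obtain ⟨N, hN, hmem⟩ := hC 0 1 one_pos
      obtain ⟨B, hB, -⟩ := hmem
      rw [hKe] at hB
      exact hB
    · exact ⟨M, ⟨Mᶜ, hM, ∅, hK.2 B0 hB0 ∅ (Set.empty_subset _), by simp⟩, hC⟩
  · rintro ⟨M, ⟨A, hA, B, hB, hAB⟩, hC⟩
    have hMsub : M ⊆ Aᶜ := by
      intro n hn hnA
      have : n ∈ Mᶜ := hAB ▸ Set.mem_union_left _ hnA
      exact this hn
    refine ⟨Aᶜ, by simpa using hA, ?_⟩
    intro f ε hε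
    obtain ⟨N, hN, C, hCK, hCeq⟩ := hC f ε hε
    set S := {n ∈ Aᶜ | ε ≤ |f (x n) - f (x N)|} with hS
    have hsub : S ⊆ C ∪ B := by
      intro n ⟨hnA, hnε⟩
      by_cases hnM : n ∈ M
      · have : n ∈ C ∩ M := by
          rw [← hCeq]; exact ⟨hnM, hnε⟩
        exact Or.inl this.1
      · have : n ∈ A ∪ B := by rw [← hAB]; exact hnM
        rcases this with h | h
        · exact absurd h hnA
        · exact Or.inr h
    have hSK : S ∈ K := hK.2 (C ∪ B) (hK.1 C hCK B hB) S hsub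
    refine ⟨N, hMsub hN, S, hSK, ?_⟩
    ext n
    constructor
    · intro hn; exact ⟨hn, hn.1⟩
    · intro hn; exact hn.1
end

section
/- Let X be a real normed space with X ≠ {0}, and let I, K be ideals on ℕ. Suppose that every weak I-Cauchy sequence in X is weak I^K-Cauchy. Then the condition AP(I,K) holds. -/
open NormedSpace Classical

/-- The condition AP(I,K): for every sequence of pairwise disjoint sets in `I` there is a
sequence of sets in `I` whose symmetric differences with the given ones lie in `K` and
whose union lies in `I`. -/
def APCondition (I K : Set (Set ℕ)) : Prop :=
  ∀ A : ℕ → Set ℕ, (∀ n, A n ∈ I) → (∀ m n, m ≠ n → Disjoint (A m) (A n)) →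
    ∃ B : ℕ → Set ℕ, (∀ n, B n ∈ I) ∧ (∀ n, symmDiff (A n) (B n) ∈ K) ∧ (⋃ n, B n) ∈ I

noncomputable section AuxStmt10

/-- Auxiliary scalar sequence: value `1/(k+1)` on `A k`, `0` off the union. -/
noncomputable def gaux (A : ℕ → Set ℕ) (n : ℕ) : ℝ :=
  if h : ∃ k, n ∈ A k then (1 : ℝ) / ((h.choose : ℝ) + 1) else 0

lemma gaux_eq {A : ℕ → Set ℕ} (hdisj : ∀ m n, m ≠ n → Disjoint (A m) (A n))
    {n k : ℕ} (hn : n ∈ A k) : gaux A n = 1 / ((k : ℝ) + 1) := by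
  have hex : ∃ j, n ∈ A j := ⟨k, hn⟩
  have hck : hex.choose = k := by
    by_contra hne
    exact Set.disjoint_left.mp (hdisj _ _ hne) hex.choose_spec hn
  simp only [gaux, dif_pos hex, hck]

lemma gaux_cases (A : ℕ → Set ℕ) (n : ℕ) :
    gaux A n = 0 ∨ ∃ k, n ∈ A k := by
  by_cases h : ∃ k, n ∈ A k
  · exact Or.inr h
  · exact Or.inl (by simp [gaux, dif_neg h])

lemma gap_zero (n : ℕ) :
    1 / (((n : ℝ) + 1) * ((n : ℝ) + 2)) ≤ |(0 : ℝ) - 1 / ((n : ℝ) + 1)| := by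
  have h1 : (0 : ℝ) < (n : ℝ) + 1 := by positivity
  rw [zero_sub, abs_neg, abs_of_pos (by positivity)]
  rw [div_le_div_iff₀ (by positivity) h1]
  nlinarith

lemma gap_ne (n j : ℕ) (hne : j ≠ n) :
    1 / (((n : ℝ) + 1) * ((n : ℝ) + 2)) ≤ |1 / ((j : ℝ) + 1) - 1 / ((n : ℝ) + 1)| := by
  have hn1 : (0 : ℝ) < (n : ℝ) + 1 := by positivity
  have hj1 : (0 : ℝ) < (j : ℝ) + 1 := by positivity
  rcases lt_or_gt_of_ne hne with hlt | hgt
  · -- j < n : 1/(j+1) - 1/(n+1) ≥ 1/((j+1)(n+1)) ≥ 1/((n+1)(n+2))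
    have hjn : (j : ℝ) + 1 ≤ (n : ℝ) := by exact_mod_cast Nat.succ_le_of_lt hlt
    have hpos : 0 < 1 / ((j : ℝ) + 1) - 1 / ((n : ℝ) + 1) := by
      have : 1 / ((n : ℝ) + 1) < 1 / ((j : ℝ) + 1) := by
        apply one_div_lt_one_div_of_lt hj1; linarith
      linarith
    rw [abs_of_pos hpos]
    rw [div_sub_div _ _ (ne_of_gt hj1) (ne_of_gt hn1), div_le_div_iff₀ (by positivity)
      (by positivity)]
    have hstep : ((j : ℝ) + 1) * ((n : ℝ) + 1) ≤ ((n : ℝ) + 1) * ((n : ℝ) + 2) := by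
      nlinarith
    have hone : (1 : ℝ) ≤ ((n : ℝ) + 1) - ((j : ℝ) + 1) := by linarith
    have hP : (0 : ℝ) < ((n : ℝ) + 1) * ((n : ℝ) + 2) := by positivity
    nlinarith [mul_le_mul_of_nonneg_right hone hP.le]
  · -- j > n : 1/(n+1) - 1/(j+1) ≥ 1/(n+1) - 1/(n+2) = 1/((n+1)(n+2))
    have hjn : (n : ℝ) + 2 ≤ (j : ℝ) + 1 := by
      have : n + 1 ≤ j := hgt
      have := (Nat.cast_le (α := ℝ)).mpr this
      push_cast at this; linarith
    have hle : 1 / ((j : ℝ) + 1) ≤ 1 / ((n : ℝ) + 2) :=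
      one_div_le_one_div_of_le (by positivity) hjn
    have hid : 1 / ((n : ℝ) + 1) - 1 / ((n : ℝ) + 2)
        = 1 / (((n : ℝ) + 1) * ((n : ℝ) + 2)) := by
      field_simp; ring
    have hpos : 1 / ((j : ℝ) + 1) - 1 / ((n : ℝ) + 1) ≤ 0 := by
      have : 1 / ((j : ℝ) + 1) ≤ 1 / ((n : ℝ) + 1) := by
        apply one_div_le_one_div_of_le hn1; linarith
      linarith
    rw [abs_of_nonpos hpos]
    linarith

lemma union_finset_mem {I : Set (Set ℕ)} (hI : IsIdeal I) (hempty : (∅ : Set ℕ) ∈ I)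
    (A : ℕ → Set ℕ) (hA : ∀ n, A n ∈ I) (s : Finset ℕ) : (⋃ k ∈ s, A k) ∈ I := by
  classical
  induction s using Finset.induction with
  | empty => simpa using hempty
  | insert _ _ hnotmem ih =>
      rw [Finset.set_biUnion_insert]
      exact hI.1 _ (hA _) _ ih

end AuxStmt10

theorem stmt10 {X : Type*} [NormedAddCommGroup X] [NormedSpace ℝ X] [Nontrivial X]
    (I K : Set (Set ℕ)) (hI : IsIdeal I) (hK : IsIdeal K)
    (h : ∀ x : ℕ → X, WeakICauchy I x → WeakIKCauchy I K x) :
    APCondition I K := by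
  intro A hA hdisj
  have hEmptyI : (∅ : Set ℕ) ∈ I := hI.2 (A 0) (hA 0) ∅ (Set.empty_subset _)
  -- ∅ ∈ K, from applying `h` to the constant zero sequence
  have hEmptyK : (∅ : Set ℕ) ∈ K := by
    have hzero : WeakICauchy I (fun _ => (0 : X)) := by
      intro f ε hε
      refine ⟨0, ?_⟩
      have hset : {n : ℕ | ε ≤ |f 0 - f 0|} = (∅ : Set ℕ) := by
        ext n; simp; linarith
      rw [hset]; exact hEmptyI
    obtain ⟨M, _, hW⟩ := h _ hzero
    obtain ⟨N, _, B, hB, -⟩ := hW 0 1 one_pos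
    exact hK.2 B hB ∅ (Set.empty_subset _)
  by_cases hU : (Set.univ : Set ℕ) ∈ I
  · refine ⟨A, hA, fun n => ?_, hI.2 _ hU _ (Set.subset_univ _)⟩
    simpa [symmDiff_self] using hEmptyK
  -- main case: ℕ ∉ I
  obtain ⟨v, hv⟩ := exists_ne (0 : X)
  obtain ⟨f, hf1, hfv⟩ := exists_dual_vector ℝ v (norm_ne_zero_iff.mpr hv)
  have hvnorm : (0 : ℝ) < ‖v‖ := norm_pos_iff.mpr hv
  set g : ℕ → ℝ := gaux A with hg
  set x : ℕ → X := fun n => g n • v with hx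
  have hxf : ∀ (f' : StrongDual ℝ X) (n : ℕ), f' (x n) = g n * f' v := by
    intro f' n
    simp [hx, map_smul, smul_eq_mul]
  -- the sequence x is weak I-Cauchy
  have hIC : WeakICauchy I x := by
    intro f' ε hε
    by_cases hc : f' v = 0
    · refine ⟨0, ?_⟩
      have hset : {n : ℕ | ε ≤ |f' (x n) - f' (x 0)|} = (∅ : Set ℕ) := by
        ext n; simp [hxf, hc]; linarith
      rw [hset]; exact hEmptyI
    · have hcpos : 0 < |f' v| := abs_pos.mpr hc
      set c := |f' v| with hcdef
      set δ := ε / (2 * c) with hδdef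
      have hδ : 0 < δ := by positivity
      set S := ⋃ k ∈ Finset.range ⌈1 / δ⌉₊, A k with hS
      have hSI : S ∈ I := union_finset_mem hI hEmptyI A hA _
      have hsub : {n : ℕ | δ ≤ |g n|} ⊆ S := by
        intro n hn
        simp only [Set.mem_setOf_eq] at hn
        rcases gaux_cases A n with h0 | ⟨k, hk⟩
        · rw [hg, h0, abs_zero] at hn; linarith
        · have hgeq : g n = 1 / ((k : ℝ) + 1) := gaux_eq hdisj hk
          have hk1 : (0 : ℝ) < (k : ℝ) + 1 := by positivity
          have hδk : δ ≤ 1 / ((k : ℝ) + 1) := by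
            rwa [hgeq, abs_of_pos (by positivity)] at hn
          have hklt : (k : ℝ) < 1 / δ := by
            have : (k : ℝ) + 1 ≤ 1 / δ := by
              rw [le_div_iff₀ hδ]
              calc ((k : ℝ) + 1) * δ ≤ ((k : ℝ) + 1) * (1 / ((k : ℝ) + 1)) := by
                    exact mul_le_mul_of_nonneg_left hδk (by positivity)
                _ = 1 := by field_simp
            linarith
          exact Set.mem_biUnion (Finset.mem_range.mpr (Nat.lt_ceil.mpr hklt)) hk
      have hexN : ∃ N, |g N| < δ := by
        by_contra hcon
        push_neg at hcon
        exact hU (hI.2 S hSI _ (fun n _ => hsub (hcon n)))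
      obtain ⟨N, hNlt⟩ := hexN
      refine ⟨N, hI.2 S hSI _ ?_⟩
      intro n hn
      apply hsub
      simp only [Set.mem_setOf_eq] at hn ⊢
      rw [hxf, hxf] at hn
      have htri : |g n - g N| ≤ |g n| + |g N| := abs_sub _ _
      have hkey : ε ≤ (|g n| + |g N|) * c := by
        calc ε ≤ |g n * f' v - g N * f' v| := hn
          _ = |g n - g N| * c := by rw [← sub_mul, abs_mul]
          _ ≤ (|g n| + |g N|) * c := by
              exact mul_le_mul_of_nonneg_right htri (abs_nonneg _)
      have h2 : 2 * δ * c = ε := by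
        rw [hδdef]; field_simp
      by_contra hlt
      push_neg at hlt
      have h3 : (|g n| + |g N|) * c < 2 * δ * c :=
        mul_lt_mul_of_pos_right (by linarith) hcpos
      linarith
  obtain ⟨M, hMc, hW⟩ := h x hIC
  have hRK : restrictIdeal K M ⊆ K := by
    rintro S ⟨B, hB, rfl⟩
    exact hK.2 B hB _ Set.inter_subset_left
  -- dichotomy
  have hdich : ∀ n, A n ∩ M ∈ K ∨ M \ A n ∈ K := by
    intro n
    set nr := (n : ℝ) with hnr
    have hεpos : (0 : ℝ) < ‖v‖ / (2 * (nr + 1) * (nr + 2)) := by positivity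
    obtain ⟨N, hNM, hSmem⟩ := hW f _ hεpos
    have hSK : {m ∈ M | ‖v‖ / (2 * (nr + 1) * (nr + 2)) ≤ |f (x m) - f (x N)|} ∈ K :=
      hRK hSmem
    set a := g N with ha
    have hεeq : ‖v‖ / (2 * (nr + 1) * (nr + 2)) = (1 / (2 * (nr + 1) * (nr + 2))) * ‖v‖ := by
      ring
    by_cases hcase : 1 / (2 * (nr + 1) * (nr + 2)) ≤ |1 / (nr + 1) - a|
    · left
      refine hK.2 _ hSK _ ?_
      rintro m ⟨hmA, hmM⟩
      refine ⟨hmM, ?_⟩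
      have hgm : g m = 1 / (nr + 1) := gaux_eq hdisj hmA
      rw [hxf, hxf, hfv]
      calc ‖v‖ / (2 * (nr + 1) * (nr + 2))
          = (1 / (2 * (nr + 1) * (nr + 2))) * ‖v‖ := hεeq
        _ ≤ |1 / (nr + 1) - a| * ‖v‖ := by
            exact mul_le_mul_of_nonneg_right hcase hvnorm.le
        _ = |g m * ‖v‖ - a * ‖v‖| := by
            rw [← sub_mul, abs_mul, abs_of_nonneg hvnorm.le, hgm]
    · right
      push_neg at hcase
      refine hK.2 _ hSK _ ?_
      rintro m ⟨hmM, hmA⟩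
      refine ⟨hmM, ?_⟩
      have hgap : 1 / ((nr + 1) * (nr + 2)) ≤ |g m - 1 / (nr + 1)| := by
        rcases gaux_cases A m with h0 | ⟨j, hj⟩
        · rw [hg, h0]; exact gap_zero n
        · have hjn : j ≠ n := fun hEq => hmA (hEq ▸ hj)
          rw [hg, gaux_eq hdisj hj]; exact gap_ne n j hjn
      have htri : |g m - 1 / (nr + 1)| ≤ |g m - a| + |a - 1 / (nr + 1)| :=
        abs_sub_le _ _ _
      have hcomm : |a - 1 / (nr + 1)| = |1 / (nr + 1) - a| := abs_sub_comm _ _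
      have halg : 1 / (2 * (nr + 1) * (nr + 2)) + 1 / (2 * (nr + 1) * (nr + 2))
          = 1 / ((nr + 1) * (nr + 2)) := by
        have h1 : (0 : ℝ) < nr + 1 := by positivity
        have h2 : (0 : ℝ) < nr + 2 := by positivity
        field_simp
        ring
      have hkey : 1 / (2 * (nr + 1) * (nr + 2)) ≤ |g m - a| := by
        rw [hcomm] at htri
        linarith
      rw [hxf, hxf, hfv]
      calc ‖v‖ / (2 * (nr + 1) * (nr + 2))
          = (1 / (2 * (nr + 1) * (nr + 2))) * ‖v‖ := hεeq
        _ ≤ |g m - a| * ‖v‖ := mul_le_mul_of_nonneg_right hkey hvnorm.le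
        _ = |g m * ‖v‖ - a * ‖v‖| := by
            rw [← sub_mul, abs_mul, abs_of_nonneg hvnorm.le]
  -- define B
  classical
  refine ⟨fun n => if A n ∩ M ∈ K then A n ∩ Mᶜ else A n, ?_, ?_, ?_⟩
  · intro n
    simp only
    by_cases hc : A n ∩ M ∈ K
    · rw [if_pos hc]; exact hI.2 (A n) (hA n) _ Set.inter_subset_left
    · rw [if_neg hc]; exact hA n
  · intro n
    simp only
    by_cases hc : A n ∩ M ∈ K
    · rw [if_pos hc]
      have hsd : symmDiff (A n) (A n ∩ Mᶜ) = A n ∩ M := by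
        ext m
        simp only [Set.mem_symmDiff, Set.mem_inter_iff, Set.mem_compl_iff]
        tauto
      rw [hsd]; exact hc
    · rw [if_neg hc]
      simpa [symmDiff_self] using hEmptyK
  · by_cases hT : ∃ n₀, A n₀ ∩ M ∉ K
    · obtain ⟨n₀, hn₀⟩ := hT
      have huniq : ∀ n, A n ∩ M ∉ K → n = n₀ := by
        intro n hn
        by_contra hne
        have hMK : M ∈ K := by
          have hu := hK.1 _ ((hdich n).resolve_left hn) _ ((hdich n₀).resolve_left hn₀)
          refine hK.2 _ hu M ?_
          intro m hm
          by_cases h1 : m ∈ A n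
          · exact Or.inr ⟨hm, fun h2 => Set.disjoint_left.mp (hdisj n n₀ hne) h1 h2⟩
          · exact Or.inl ⟨hm, h1⟩
        exact hn (hK.2 M hMK _ Set.inter_subset_right)
      refine hI.2 (Mᶜ ∪ A n₀) (hI.1 _ hMc _ (hA n₀)) _ ?_
      intro m hm
      obtain ⟨n, hmn⟩ := Set.mem_iUnion.mp hm
      by_cases hc : A n ∩ M ∈ K
      · rw [if_pos hc] at hmn; exact Or.inl hmn.2
      · rw [if_neg hc] at hmn; rw [huniq n hc] at hmn; exact Or.inr hmn
    · push_neg at hT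
      refine hI.2 Mᶜ hMc _ ?_
      intro m hm
      obtain ⟨n, hmn⟩ := Set.mem_iUnion.mp hm
      rw [if_pos (hT n)] at hmn
      exact hmn.2
end

section
/- Let X be a reflexive real Banach space with dual X* and I, K ideals on ℕ. If a sequence (fₙ) in X* is weak* I^K-Cauchy, then it is weak I^K-Cauchy (as a sequence in the normed space X*). -/
open NormedSpace Classical

/-- The sequence of functionals `f` restricted to `M` is weak* `K|_M`-Cauchy. -/
def WeakStarCauchyOn {X : Type*} [NormedAddCommGroup X] [NormedSpace ℝ X]
    (K : Set (Set ℕ)) (M : Set ℕ) (f : ℕ → StrongDual ℝ X) : Prop :=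
  ∀ ε > (0 : ℝ), ∀ x : X, ∃ N ∈ M,
    {n ∈ M | ε ≤ |f n x - f N x|} ∈ restrictIdeal K M

/-- A sequence of functionals `f` is weak* `I^K`-Cauchy. -/
def WeakStarIKCauchy {X : Type*} [NormedAddCommGroup X] [NormedSpace ℝ X]
    (I K : Set (Set ℕ)) (f : ℕ → StrongDual ℝ X) : Prop :=
  ∃ M : Set ℕ, Mᶜ ∈ I ∧ WeakStarCauchyOn K M f

theorem stmt15 {X : Type*} [NormedAddCommGroup X] [NormedSpace ℝ X] [CompleteSpace X]
    (hrefl : Function.Surjective (NormedSpace.inclusionInDoubleDual ℝ X))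
    (I K : Set (Set ℕ)) (hI : IsIdeal I) (hK : IsIdeal K) (f : ℕ → StrongDual ℝ X)
    (h : WeakStarIKCauchy I K f) : WeakIKCauchy I K f := by
  obtain ⟨M, hM, hw⟩ := h
  refine ⟨M, hM, fun g ε hε => ?_⟩
  obtain ⟨x, hx⟩ := hrefl g
  obtain ⟨N, hN, hset⟩ := hw ε hε x
  refine ⟨N, hN, ?_⟩
  have : ∀ n, g (f n) = f n x := by
    intro n; rw [← hx]; rfl
  simpa [this] using hset
end
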